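/- arXiv:0806.0264 — 2 statements merged into one kernel-verified Lean document; each statement's English description precedes it below -/
import Mathlib

section
/- For the comultiplication Δ, antipode S, and divided powers in the integral form of the quantized enveloping algebra U_q(gl_n), one has for every l ≥ 1 and each index i: ∑_{k=0}^{l-1} (-q^{l-1})^{-k} (f_i^{(k)} ⊗ 1) · Δ(f_i^{(l-k)}) = (K_i^l ⊗ 1) · (1 ⊗ f_i^{(l)} − S(f_i^{(l)}) ⊗ 1). -/
namespace QuantumGL

noncomputable section

/-- The field `ℚ(q)` of rational functions. -/
abbrev Qq := FractionRing (Polynomial ℚ)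

open scoped TensorProduct

variable (q : Qqˣ)

/-- The balanced quantum integer `[l]_q = ∑_{i=0}^{l-1} q^{2i−l+1}`. -/
def qInt (l : ℕ) : Qq := ∑ i ∈ Finset.range l, ((q ^ (2 * (i : ℤ) - l + 1) : Qqˣ) : Qq)

/-- The quantum factorial `[l]_q!`. -/
def qFact (l : ℕ) : Qq := ∏ i ∈ Finset.range l, qInt q (i + 1)

/-- The Gaussian binomial coefficient `[l choose k]_q = [l]_q!/([k]_q! [l−k]_q!)`. -/
def qBinom (l k : ℕ) : Qq := qFact q l / (qFact q k * qFact q (l - k))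

open Finset

/-- A field embedding of `ℚ(q)` into `ℝ`. -/
noncomputable def realEmb : Qq →+* ℝ :=
  IsFractionRing.lift (g := ((Polynomial.aeval (liouvilleNumber 3)).toRingHom :
      Polynomial ℚ →+* ℝ)) (by
    have ht : Transcendental ℚ (liouvilleNumber 3) := fun h =>
      (transcendental_liouvilleNumber (by norm_num))
        ((IsFractionRing.isAlgebraic_iff ℤ ℚ ℝ).mpr h)
    exact transcendental_iff_injective.mp ht)

lemma qInt_ne_zero (q : Qqˣ) (n : ℕ) : qInt q (n + 1) ≠ 0 := by
  intro h
  have hr : realEmb (q : Qq) ≠ 0 := (map_ne_zero realEmb).mpr q.ne_zero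
  set r := realEmb (q : Qq) with hrdef
  have h2 := congrArg realEmb h
  rw [qInt, map_sum, map_zero] at h2
  have h3 : ∑ i ∈ range (n+1), r ^ (2 * (i:ℤ) - (n+1) + 1) = 0 := by
    rw [← h2]
    refine sum_congr rfl fun i _ => ?_
    rw [Units.val_zpow_eq_zpow_val, map_zpow₀]
    push_cast
    ring_nf
    rw [hrdef]
  have h4 : ∑ i ∈ range (n+1), r ^ (2 * (i:ℤ) - (n+1) + 1)
      = r ^ (-(n:ℤ)) * ∑ i ∈ range (n+1), (r ^ i) ^ 2 := by
    rw [mul_sum]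
    refine sum_congr rfl fun i _ => ?_
    rw [← zpow_natCast r i, ← zpow_natCast (r ^ (i:ℤ)) 2, ← zpow_mul, ← zpow_add₀ hr]
    congr 1
    push_cast; ring
  rw [h4] at h3
  have h5 : (0:ℝ) < ∑ i ∈ range (n+1), (r ^ i) ^ 2 :=
    Finset.sum_pos (fun i _ => pow_two_pos_of_ne_zero (pow_ne_zero i hr))
      ⟨0, mem_range.2 (Nat.succ_pos n)⟩
  exact absurd h3 (mul_ne_zero (zpow_ne_zero _ hr) h5.ne')

lemma qFact_ne_zero (q : Qqˣ) (n : ℕ) : qFact q n ≠ 0 :=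
  Finset.prod_ne_zero_iff.mpr fun i _ => qInt_ne_zero q i

@[simp] lemma qFact_zero (q : Qqˣ) : qFact q 0 = 1 := by simp [qFact]

lemma qFact_succ (q : Qqˣ) (n : ℕ) : qFact q (n + 1) = qFact q n * qInt q (n + 1) :=
  Finset.prod_range_succ _ _

lemma qBinom_zero (q : Qqˣ) (n : ℕ) : qBinom q n 0 = 1 := by
  simp [qBinom, div_self (qFact_ne_zero q n)]

lemma qBinom_self (q : Qqˣ) (n : ℕ) : qBinom q n n = 1 := by
  simp [qBinom, Nat.sub_self, div_self (qFact_ne_zero q n)]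

lemma qInt_eq (q : Qqˣ) (l : ℕ) :
    qInt q l = ∑ i ∈ range l, (q : Qq) ^ (2 * (i:ℤ) - l + 1) :=
  sum_congr rfl fun i _ => Units.val_zpow_eq_zpow_val _ _

lemma qInt_add (q : Qqˣ) (a b : ℕ) :
    qInt q (a + b) = (q:Qq) ^ (-(b:ℤ)) * qInt q a + (q:Qq) ^ (a:ℤ) * qInt q b := by
  have hv : (q:Qq) ≠ 0 := q.ne_zero
  rw [qInt_eq, qInt_eq, qInt_eq, Finset.sum_range_add, mul_sum, mul_sum]
  congr 1
  · refine sum_congr rfl fun i _ => ?_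
    rw [← zpow_add₀ hv]; congr 1; push_cast; ring
  · refine sum_congr rfl fun i _ => ?_
    rw [← zpow_add₀ hv]; congr 1; push_cast; ring

lemma qBinom_pascal (q : Qqˣ) (n k : ℕ) (h : k + 1 ≤ n) :
    qBinom q (n + 1) (k + 1) =
      (q:Qq) ^ (-((k:ℤ) + 1)) * qBinom q n (k + 1) + (q:Qq) ^ ((n:ℤ) - k) * qBinom q n k := by
  have hv : (q:Qq) ≠ 0 := q.ne_zero
  obtain ⟨a, rfl⟩ : ∃ a, n = k + 1 + a := ⟨n - (k + 1), by omega⟩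
  have s1 : k + 1 + a + 1 - (k + 1) = a + 1 := by omega
  have s2 : k + 1 + a - (k + 1) = a := by omega
  have s3 : k + 1 + a - k = a + 1 := by omega
  rw [qBinom, qBinom, qBinom, s1, s2, s3]
  have e1 : qFact q (k + 1 + a + 1) = qFact q (k + 1 + a) * qInt q (k + 1 + a + 1) :=
    qFact_succ q _
  have e2 : qInt q (k + 1 + a + 1) =
      (q:Qq) ^ (-((k:ℤ) + 1)) * qInt q (a + 1) + (q:Qq) ^ ((a:ℤ) + 1) * qInt q (k + 1) := by
    have := qInt_add q (a + 1) (k + 1)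
    rw [show a + 1 + (k + 1) = k + 1 + a + 1 by omega] at this
    rw [this]; push_cast; ring
  have e3 : qFact q (a + 1) = qFact q a * qInt q (a + 1) := qFact_succ q a
  have e4 : qFact q (k + 1) = qFact q k * qInt q (k + 1) := qFact_succ q k
  have e5 : ((k:ℤ) + 1 + a) - k = (a:ℤ) + 1 := by ring
  have n1 : qInt q (a + 1) ≠ 0 := qInt_ne_zero q a
  have n2 : qInt q (k + 1) ≠ 0 := qInt_ne_zero q k
  have n3 : qFact q k ≠ 0 := qFact_ne_zero q k
  have n4 : qFact q a ≠ 0 := qFact_ne_zero q a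
  rw [e1, e2, e3, e4]
  push_cast
  rw [e5]
  field_simp

lemma keySum (q : Qqˣ) (m : ℕ) (hm : 1 ≤ m) :
    ∑ k ∈ range (m + 1), (-1:Qq) ^ k * (q:Qq) ^ (-((k:ℤ) * ((m:ℤ) - 1))) * qBinom q m k = 0 := by
  have hv : (q:Qq) ≠ 0 := q.ne_zero
  obtain ⟨n, rfl⟩ : ∃ n, m = n + 1 := ⟨m - 1, by omega⟩
  have hexp : ∀ k : ℕ, -((k:ℤ) * (((n:ℤ) + 1) - 1)) = -((k:ℤ) * n) := by intro k; ring
  -- b k := (-1)^k v^{-(k(n+1))} qBinom n k,  B := ∑_{k ≤ n} b k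
  set b : ℕ → Qq := fun k => (-1:Qq) ^ k * (q:Qq) ^ (-((k:ℤ) * ((n:ℤ) + 1))) * qBinom q n k
    with hb
  rw [Finset.sum_range_succ, Finset.sum_range_succ']
  have mid : ∀ k ∈ range n,
      (-1:Qq) ^ (k+1) * (q:Qq) ^ (-((((k+1:ℕ)):ℤ) * ((((n+1:ℕ)):ℤ) - 1))) * qBinom q (n+1) (k+1)
        = b (k+1) - b k := by
    intro k hk
    have hk' : k + 1 ≤ n := mem_range.mp hk
    rw [qBinom_pascal q n k hk', hb]
    simp only
    push_cast
    ring_nf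
    simp only [← zpow_add₀ hv]
    ring_nf
  rw [Finset.sum_congr rfl mid, Finset.sum_range_sub b, hb]
  simp only [qBinom_self, qBinom_zero, pow_zero, Nat.cast_zero, mul_one, one_mul,
    Nat.cast_ofNat, zpow_zero]
  push_cast
  ring_nf

variable {A : Type*} [Ring A] [Algebra Qq A]
  (F : ℕ → A) (K : Aˣ)

/-- The explicit formula for `Δ(f_i^{(l)}) = ∑_{k=0}^{l} q^{−k(l−k)} f_i^{(l−k)} K_i^k ⊗ f_i^{(k)}`,
where `F l = f_i^{(l)}` and `K = K_i`. -/
def comulF (l : ℕ) : A ⊗[Qq] A :=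
  ∑ k ∈ Finset.range (l + 1),
    ((q ^ (-((k : ℤ) * ((l : ℤ) - (k : ℤ)))) : Qqˣ) : Qq) •
      ((F (l - k) * (K : A) ^ k) ⊗ₜ[Qq] F k)

/-- The explicit formula for `S(f_i^{(l)}) = (−1)^l q^{−l(l−1)} K_i^{−l} f_i^{(l)}`. -/
def antipodeF (l : ℕ) : A :=
  ((-1 : Qq) ^ l * ((q ^ (-((l : ℤ) * ((l : ℤ) - 1))) : Qqˣ) : Qq)) •
    (((K ^ (-(l : ℤ)) : Aˣ) : A) * F l)

/-- in the integral form of `U_q(gl_n)` (here abstracted as any `ℚ(q)`-algebra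
`A` containing the divided powers `F l = f_i^{(l)}` and the invertible element `K = K_i`,
subject to the defining identities below), for every `l ≥ 1`:
`∑_{k=0}^{l-1} (−q^{l−1})^{−k} (f_i^{(k)} ⊗ 1) · Δ(f_i^{(l−k)})
   = (K_i^l ⊗ 1) · (1 ⊗ f_i^{(l)} − S(f_i^{(l)}) ⊗ 1)`. -/
theorem divided_power_f_identity
    (hF0 : F 0 = 1)
    (hFmul : ∀ k l : ℕ, F k * F l = qBinom q (k + l) k • F (k + l))
    (hKF : ∀ l : ℕ, (K : A) * F l = ((q ^ (-(2 * (l : ℤ))) : Qqˣ) : Qq) • (F l * (K : A)))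
    (l : ℕ) (hl : 1 ≤ l) :
    ∑ k ∈ Finset.range l,
        ((-1 : Qq) ^ k * ((q ^ (-((k : ℤ) * ((l : ℤ) - 1))) : Qqˣ) : Qq)) •
          ((F k ⊗ₜ[Qq] (1 : A)) * comulF q F K (l - k)) =
      (((K : A) ^ l) ⊗ₜ[Qq] (1 : A)) *
        ((1 : A) ⊗ₜ[Qq] F l - antipodeF q F K l ⊗ₜ[Qq] (1 : A)) := by
  have hv : (q : Qq) ≠ 0 := q.ne_zero
  -- K^m * K^{-m} = 1 in A
  have hK : ∀ m : ℕ, ((K : A) ^ m) * ((K ^ (-(m : ℤ)) : Aˣ) : A) = 1 := by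
    intro m
    rw [← Units.val_pow_eq_pow_val, ← Units.val_mul, ← zpow_natCast K m, ← zpow_add,
      add_neg_cancel, zpow_zero, Units.val_one]
  -- the k = l term of the extended sum
  have hterm : ((-1 : Qq) ^ l * ((q ^ (-((l : ℤ) * ((l : ℤ) - 1))) : Qqˣ) : Qq)) •
      ((F l ⊗ₜ[Qq] (1 : A)) * comulF q F K (l - l)) =
      ((-1 : Qq) ^ l * ((q ^ (-((l : ℤ) * ((l : ℤ) - 1))) : Qqˣ) : Qq)) • (F l ⊗ₜ[Qq] (1 : A)) := by
    rw [Nat.sub_self]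
    congr 1
    rw [comulF]
    simp [hF0, Algebra.TensorProduct.tmul_mul_tmul]
  -- simplify the right-hand side
  have hrhs : (((K : A) ^ l) ⊗ₜ[Qq] (1 : A)) *
      ((1 : A) ⊗ₜ[Qq] F l - antipodeF q F K l ⊗ₜ[Qq] (1 : A)) =
      (((K : A) ^ l) ⊗ₜ[Qq] F l) -
        ((-1 : Qq) ^ l * ((q ^ (-((l : ℤ) * ((l : ℤ) - 1))) : Qqˣ) : Qq)) •
          (F l ⊗ₜ[Qq] (1 : A)) := by
    rw [mul_sub, antipodeF, Algebra.TensorProduct.tmul_mul_tmul, mul_one, one_mul]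
    congr 1
    rw [← TensorProduct.smul_tmul', mul_smul_comm, Algebra.TensorProduct.tmul_mul_tmul,
      mul_one, ← mul_assoc, hK l, one_mul]
  -- the key identity for the extended sum
  have key : ∑ k ∈ Finset.range (l + 1),
      ((-1 : Qq) ^ k * ((q ^ (-((k : ℤ) * ((l : ℤ) - 1))) : Qqˣ) : Qq)) •
        ((F k ⊗ₜ[Qq] (1 : A)) * comulF q F K (l - k)) =
      ((K : A) ^ l) ⊗ₜ[Qq] F l := by
    have expand : ∀ k ∈ Finset.range (l + 1),
        ((-1 : Qq) ^ k * ((q ^ (-((k : ℤ) * ((l : ℤ) - 1))) : Qqˣ) : Qq)) •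
          ((F k ⊗ₜ[Qq] (1 : A)) * comulF q F K (l - k)) =
        ∑ j ∈ Finset.range (l - k + 1),
          ((-1 : Qq) ^ k *
              (q : Qq) ^ (-((k : ℤ) * ((l : ℤ) - 1)) + -((j : ℤ) * ((l : ℤ) - k - j))) *
              qBinom q (l - j) k) •
            ((F (l - j) * (K : A) ^ j) ⊗ₜ[Qq] F j) := by
      intro k hk
      have hkl : k ≤ l := Nat.lt_succ_iff.mp (Finset.mem_range.mp hk)
      rw [comulF, Finset.mul_sum, Finset.smul_sum]
      refine Finset.sum_congr rfl fun j hj => ?_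
      have hj' : j ≤ l - k := Nat.lt_succ_iff.mp (Finset.mem_range.mp hj)
      have hsub : k + (l - k - j) = l - j := by omega
      have hcast : ((l - k : ℕ) : ℤ) = (l : ℤ) - k := by
        rw [Nat.cast_sub hkl]
      rw [mul_smul_comm, Algebra.TensorProduct.tmul_mul_tmul, one_mul, ← mul_assoc,
        hFmul k (l - k - j), hsub, smul_mul_assoc, ← TensorProduct.smul_tmul', smul_smul,
        smul_smul]
      congr 1
      simp only [Units.val_zpow_eq_zpow_val, hcast]
      rw [zpow_add₀ hv]
      ring
    rw [Finset.sum_congr rfl expand,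
      Finset.sum_comm' (t' := Finset.range (l + 1)) (s' := fun j => Finset.range (l - j + 1))
        (fun k j => by simp only [Finset.mem_range]; omega)]
    have inner : ∀ j ∈ Finset.range (l + 1),
        (∑ k ∈ Finset.range (l - j + 1),
          (-1 : Qq) ^ k *
            (q : Qq) ^ (-((k : ℤ) * ((l : ℤ) - 1)) + -((j : ℤ) * ((l : ℤ) - k - j))) *
            qBinom q (l - j) k) = if j = l then 1 else 0 := by
      intro j hj
      have hjl : j ≤ l := Nat.lt_succ_iff.mp (Finset.mem_range.mp hj)
      by_cases hje : j = l
      · subst hje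
        rw [if_pos rfl, Nat.sub_self]
        simp [qBinom_zero]
      · rw [if_neg hje]
        have hm : 1 ≤ l - j := by omega
        have hcast : ((l - j : ℕ) : ℤ) = (l : ℤ) - j := by rw [Nat.cast_sub hjl]
        have step : ∀ k ∈ Finset.range (l - j + 1),
            (-1 : Qq) ^ k *
              (q : Qq) ^ (-((k : ℤ) * ((l : ℤ) - 1)) + -((j : ℤ) * ((l : ℤ) - k - j))) *
              qBinom q (l - j) k =
            (q : Qq) ^ (-((j : ℤ) * (((l - j : ℕ) : ℤ)))) *
              ((-1 : Qq) ^ k * (q : Qq) ^ (-((k : ℤ) * (((l - j : ℕ) : ℤ) - 1))) *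
                qBinom q (l - j) k) := by
          intro k hk
          rw [hcast]
          have he : (-((k : ℤ) * ((l : ℤ) - 1)) + -((j : ℤ) * ((l : ℤ) - k - j)))
              = (-((j : ℤ) * ((l : ℤ) - j))) + (-((k : ℤ) * (((l : ℤ) - j) - 1))) := by ring
          rw [he, zpow_add₀ hv]
          ring
        rw [Finset.sum_congr rfl step, ← Finset.mul_sum, keySum q (l - j) hm, mul_zero]
    rw [Finset.sum_congr rfl (fun j hj => by rw [← Finset.sum_smul, inner j hj])]
    simp only [ite_smul, one_smul, zero_smul]
    rw [Finset.sum_ite_eq' (Finset.range (l + 1)) l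
      (fun j => (F (l - j) * (K : A) ^ j) ⊗ₜ[Qq] F j), if_pos (Finset.self_mem_range_succ l),
      Nat.sub_self, hF0, one_mul]
  rw [Finset.sum_range_succ, hterm] at key
  rw [hrhs, ← key]
  abel


end

end QuantumGL
end

section
/- Let V = R^n and let the Hecke algebra H_m act on V^{⊗m} by v_i T_k = q^{-1} v_i if i_k = i_{k+1}; v_{i·s_k} if i_k < i_{k+1}; and v_{i·s_k} + (q^{-1}−q) v_i if i_k > i_{k+1}. Then this assignment satisfies the Hecke algebra relations, i.e., it defines a right H_m-module structure on V^{⊗m}. -/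
namespace HeckeActionOnTensorSpace

variable {R : Type*} [CommRing R] (q : Rˣ) (m n : ℕ)

/-- Tensor space `V^{⊗m}` for `V = R^n`, modelled on its basis of multi-indices. -/
abbrev TensorSpace (R : Type*) [CommRing R] (m n : ℕ) := (Fin m → Fin n) → R

/-- The matrix (rows and columns indexed by multi-indices) of the right action of the
Hecke algebra generator `T_k`:
`v_i T_k = q⁻¹ v_i` if `i_k = i_{k+1}`, `v_{i·s_k}` if `i_k < i_{k+1}`, and
`v_{i·s_k} + (q⁻¹ − q) v_i` if `i_k > i_{k+1}`;  entry `(a, b)` is the coefficient of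
`v_b` in `v_a T_k`. -/
def heckeMatrix (k : ℕ) (hk : k + 1 < m) :
    Matrix (Fin m → Fin n) (Fin m → Fin n) R :=
  fun a b =>
    let kk : Fin m := ⟨k, by omega⟩
    let kk1 : Fin m := ⟨k + 1, hk⟩
    if a kk = a kk1 then (if b = a then ((q⁻¹ : Rˣ) : R) else 0)
    else if a kk < a kk1 then (if b = a ∘ Equiv.swap kk kk1 then 1 else 0)
    else (if b = a ∘ Equiv.swap kk kk1 then 1 else 0) +
      (if b = a then ((q⁻¹ : Rˣ) : R) - ((q : Rˣ) : R) else 0)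

/-- The endomorphism of tensor space given by the right action of `T_k` (transposed matrix,
acting on coordinate vectors). -/
noncomputable def heckeOp (k : ℕ) (hk : k + 1 < m) :
    Module.End R (TensorSpace R m n) :=
  Matrix.toLin' (heckeMatrix q m n k hk).transpose


lemma comp_swap_swap {α : Type*} (c : Fin m → α) (i j : Fin m) :
    (c ∘ Equiv.swap i j) ∘ Equiv.swap i j = c := by
  funext x; simp [Function.comp, Equiv.swap_apply_self]

lemma comp_swap_iff {α : Type*} (a b : Fin m → α) (i j : Fin m) :
    b = a ∘ Equiv.swap i j ↔ a = b ∘ Equiv.swap i j := by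
  constructor <;> rintro rfl <;> rw [comp_swap_swap]

lemma heckeOp_apply (k : ℕ) (hk : k + 1 < m) (v : TensorSpace R m n) (b : Fin m → Fin n) :
    heckeOp q m n k hk v b =
      (if b ⟨k, by omega⟩ = b ⟨k + 1, hk⟩ then ((q⁻¹ : Rˣ) : R) * v b
       else if b ⟨k, by omega⟩ < b ⟨k + 1, hk⟩ then
         v (b ∘ Equiv.swap ⟨k, by omega⟩ ⟨k + 1, hk⟩)
       else v (b ∘ Equiv.swap ⟨k, by omega⟩ ⟨k + 1, hk⟩) +
         (((q⁻¹ : Rˣ) : R) - ((q : Rˣ) : R)) * v b) := by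
  set kk : Fin m := ⟨k, by omega⟩ with hkk
  set kk1 : Fin m := ⟨k + 1, hk⟩ with hkk1
  have hne : kk ≠ kk1 := by simp [hkk, hkk1, Fin.ext_iff]
  have key : heckeOp q m n k hk v b = ∑ a, heckeMatrix q m n k hk a b * v a := by
    simp [heckeOp, Matrix.toLin'_apply, Matrix.mulVec, dotProduct,
      Matrix.transpose_apply]
  rw [key]
  set s := Equiv.swap kk kk1 with hs
  have hsl : s kk = kk1 := Equiv.swap_apply_left _ _
  have hsr : s kk1 = kk := Equiv.swap_apply_right _ _
  by_cases h : b kk = b kk1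
  · rw [if_pos h, Finset.sum_eq_single b]
    · simp [heckeMatrix, ← hkk, ← hkk1, h]
    · intro a _ hab
      have hba : ¬ b = a := fun h' => hab h'.symm
      simp only [heckeMatrix, ← hkk, ← hkk1, ← hs]
      by_cases h1 : a kk = a kk1
      · simp [h1, hba]
      · have hbs : ¬ b = a ∘ s := by
          rintro rfl
          exact h1 (by simpa [hsl, hsr] using h.symm)
        simp [h1, hbs, hba]
    · simp
  · have hbbs : b ≠ b ∘ s := fun hb => h (by
      have := congrFun hb kk
      simpa [hsl] using this)
    have h0 : ∀ a ∈ (Finset.univ : Finset (Fin m → Fin n)),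
        a ∉ ({b, b ∘ s} : Finset (Fin m → Fin n)) → heckeMatrix q m n k hk a b * v a = 0 := by
      intro a _ ha
      simp only [Finset.mem_insert, Finset.mem_singleton, not_or] at ha
      obtain ⟨ha1, ha2⟩ := ha
      have hba : ¬ b = a := fun h' => ha1 h'.symm
      have hbs : ¬ b = a ∘ s := fun h' => ha2 ((comp_swap_iff m a b kk kk1).mp h')
      simp [heckeMatrix, ← hkk, ← hkk1, ← hs, hba, hbs]
    rw [← Finset.sum_subset (Finset.subset_univ _) h0, Finset.sum_pair hbbs]
    have ebs0 : (b ∘ s) kk = b kk1 := by simp [hsl]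
    have ebs1 : (b ∘ s) kk1 = b kk := by simp [hsr]
    have hback : b = (b ∘ s) ∘ s := (comp_swap_swap m b kk kk1).symm
    rw [if_neg h]
    by_cases h1 : b kk < b kk1
    · rw [if_pos h1]
      have e1 : heckeMatrix q m n k hk b b * v b = 0 := by
        simp [heckeMatrix, ← hkk, ← hkk1, ← hs, h, h1, hbbs]
      have e2 : heckeMatrix q m n k hk (b ∘ s) b * v (b ∘ s) = v (b ∘ s) := by
        have hc1 : ¬ b kk1 = b kk := fun h' => h h'.symm
        have hc2 : ¬ b kk1 < b kk := not_lt.mpr h1.le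
        simp [heckeMatrix, ← hkk, ← hkk1, ← hs, hsl, hsr, hc1, hc2, ← hback, hbbs]
      rw [e1, e2, zero_add]
    · rw [if_neg h1]
      have hgt : b kk1 < b kk := lt_of_le_of_ne (not_lt.mp h1) (fun h' => h h'.symm)
      have e1 : heckeMatrix q m n k hk b b * v b = (((q⁻¹ : Rˣ) : R) - ((q : Rˣ) : R)) * v b := by
        simp [heckeMatrix, ← hkk, ← hkk1, ← hs, h, h1, hbbs]
      have e2 : heckeMatrix q m n k hk (b ∘ s) b * v (b ∘ s) = v (b ∘ s) := by
        simp [heckeMatrix, ← hkk, ← hkk1, ← hs, hsl, hsr, hgt, hgt.ne, ← hback]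
      rw [e1, e2]
      ring


lemma heckeOp_apply2 (k : ℕ) (hk : k + 1 < m) (kk kk1 : Fin m)
    (e0 : (⟨k, by omega⟩ : Fin m) = kk) (e1 : (⟨k + 1, hk⟩ : Fin m) = kk1)
    (v : TensorSpace R m n) (b : Fin m → Fin n) :
    heckeOp q m n k hk v b =
      (if b kk = b kk1 then ((q⁻¹ : Rˣ) : R) * v b
       else if b kk < b kk1 then v (b ∘ Equiv.swap kk kk1)
       else v (b ∘ Equiv.swap kk kk1) + (((q⁻¹ : Rˣ) : R) - ((q : Rˣ) : R)) * v b) := by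
  subst e0; subst e1
  exact heckeOp_apply q m n k hk v b

lemma comp_braid {α : Type*} (c : Fin m → α) (i j l : Fin m)
    (hij : i ≠ j) (hjl : j ≠ l) (hil : i ≠ l) :
    ((c ∘ Equiv.swap i j) ∘ Equiv.swap j l) ∘ Equiv.swap i j
      = ((c ∘ Equiv.swap j l) ∘ Equiv.swap i j) ∘ Equiv.swap j l := by
  have h1 := Equiv.swap_mul_swap_mul_swap hij hil
  have h2 := Equiv.swap_mul_swap_mul_swap (x := l) (y := j) (z := i) hjl.symm hil.symm
  rw [Equiv.swap_comm j i, Equiv.swap_comm l j] at h2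
  have key : Equiv.swap i j * Equiv.swap j l * Equiv.swap i j
      = Equiv.swap j l * Equiv.swap i j * Equiv.swap j l := by
    rw [h1, h2, Equiv.swap_comm]
  funext x
  have := congrArg (fun σ : Equiv.Perm (Fin m) => c (σ x)) key
  simpa [Equiv.Perm.mul_apply] using this

lemma comp_swap_comm {α : Type*} (c : Fin m → α) (i j i' j' : Fin m)
    (h1 : i ≠ i') (h2 : i ≠ j') (h3 : j ≠ i') (h4 : j ≠ j') :
    ((c ∘ Equiv.swap i' j') ∘ Equiv.swap i j)
      = ((c ∘ Equiv.swap i j) ∘ Equiv.swap i' j') := by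
  funext x
  simp only [Function.comp_apply, Equiv.swap_apply_def]
  split_ifs <;> simp_all


set_option maxHeartbeats 2000000 in
/-- the above assignment satisfies the defining relations of the Hecke
algebra `H_m` — the quadratic relations `(T_k + q)(T_k − q⁻¹) = 0`, the braid relations,
and commutation of distant generators — hence it defines a right `H_m`-module structure
on `V^{⊗m}`. -/
theorem hecke_relations_hold :
    (∀ k (hk : k + 1 < m),
      (heckeOp q m n k hk + (q : R) • (1 : Module.End R (TensorSpace R m n))) *
        (heckeOp q m n k hk - ((q⁻¹ : Rˣ) : R) • 1) = 0) ∧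
    (∀ k (hk : k + 2 < m),
      heckeOp q m n k (by omega) * heckeOp q m n (k + 1) hk * heckeOp q m n k (by omega) =
      heckeOp q m n (k + 1) hk * heckeOp q m n k (by omega) * heckeOp q m n (k + 1) hk) ∧
    (∀ k j (hk : k + 1 < m) (hj : j + 1 < m), k + 2 ≤ j →
      heckeOp q m n k hk * heckeOp q m n j hj = heckeOp q m n j hj * heckeOp q m n k hk) := by
  refine ⟨?_, ?_, ?_⟩
  · intro k hk
    have hq : ((q : Rˣ) : R) * ((q⁻¹ : Rˣ) : R) = 1 := q.mul_inv
    have hq' : ((q⁻¹ : Rˣ) : R) * ((q : Rˣ) : R) = 1 := q.inv_mul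
    set kk : Fin m := ⟨k, by omega⟩ with hkk
    set kk1 : Fin m := ⟨k + 1, hk⟩ with hkk1
    apply LinearMap.ext; intro v; funext b
    simp only [Module.End.mul_apply, LinearMap.add_apply, LinearMap.sub_apply,
      LinearMap.smul_apply, Module.End.one_apply, LinearMap.zero_apply,
      Pi.add_apply, Pi.sub_apply, Pi.smul_apply, Pi.zero_apply, smul_eq_mul,
      heckeOp_apply2 q m n k hk kk kk1 hkk.symm hkk1.symm,
      Function.comp_apply, Equiv.swap_apply_left, Equiv.swap_apply_right,
      comp_swap_swap]
    split_ifs <;>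
      first
        | (exfalso; omega)
        | ring1
        | linear_combination (v b) * hq
        | linear_combination (-(v b)) * hq
        | linear_combination (v (b ∘ Equiv.swap kk kk1)) * hq
        | linear_combination (-(v (b ∘ Equiv.swap kk kk1))) * hq
  · intro k hk
    have hq : ((q : Rˣ) : R) * ((q⁻¹ : Rˣ) : R) = 1 := q.mul_inv
    have hk0 : k + 1 < m := by omega
    set kk : Fin m := ⟨k, by omega⟩ with hkk
    set kk1 : Fin m := ⟨k + 1, by omega⟩ with hkk1
    set kk2 : Fin m := ⟨k + 2, hk⟩ with hkk2
    have h01 : kk ≠ kk1 := by simp [hkk, hkk1, Fin.ext_iff]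
    have h12 : kk1 ≠ kk2 := by simp [hkk1, hkk2, Fin.ext_iff]
    have h02 : kk ≠ kk2 := by simp [hkk, hkk2, Fin.ext_iff]
    have es2 : Equiv.swap kk kk1 kk2 = kk2 :=
      Equiv.swap_apply_of_ne_of_ne h02.symm h12.symm
    have et0 : Equiv.swap kk1 kk2 kk = kk :=
      Equiv.swap_apply_of_ne_of_ne h01 h02
    have hbr : ∀ c : Fin m → Fin n,
        ((c ∘ Equiv.swap kk kk1) ∘ Equiv.swap kk1 kk2) ∘ Equiv.swap kk kk1
          = ((c ∘ Equiv.swap kk1 kk2) ∘ Equiv.swap kk kk1) ∘ Equiv.swap kk1 kk2 :=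
      fun c => comp_braid m c kk kk1 kk2 h01 h12 h02
    apply LinearMap.ext; intro v; funext b
    simp only [Module.End.mul_apply,
      heckeOp_apply2 q m n k hk0 kk kk1 hkk.symm hkk1.symm,
      heckeOp_apply2 q m n (k + 1) hk kk1 kk2 hkk1.symm hkk2.symm,
      Function.comp_apply, Equiv.swap_apply_left, Equiv.swap_apply_right,
      es2, et0, comp_swap_swap, hbr]
    split_ifs <;>
      first
        | (exfalso; omega)
        | ring1
        | linear_combination ((((q⁻¹ : Rˣ) : R) - ((q : Rˣ) : R)) * v b) * hq
        | linear_combination (-((((q⁻¹ : Rˣ) : R) - ((q : Rˣ) : R)) * v b)) * hq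
  · intro k j hk hj hlt
    set kk : Fin m := ⟨k, by omega⟩ with hkk
    set kk1 : Fin m := ⟨k + 1, hk⟩ with hkk1
    set jj : Fin m := ⟨j, by omega⟩ with hjj
    set jj1 : Fin m := ⟨j + 1, hj⟩ with hjj1
    have h1 : kk ≠ jj := by simp only [hkk, hjj, ne_eq, Fin.mk.injEq]; omega
    have h2 : kk ≠ jj1 := by simp only [hkk, hjj1, ne_eq, Fin.mk.injEq]; omega
    have h3 : kk1 ≠ jj := by simp only [hkk1, hjj, ne_eq, Fin.mk.injEq]; omega
    have h4 : kk1 ≠ jj1 := by simp only [hkk1, hjj1, ne_eq, Fin.mk.injEq]; omega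
    have eu0 : Equiv.swap jj jj1 kk = kk := Equiv.swap_apply_of_ne_of_ne h1 h2
    have eu1 : Equiv.swap jj jj1 kk1 = kk1 := Equiv.swap_apply_of_ne_of_ne h3 h4
    have es0 : Equiv.swap kk kk1 jj = jj := Equiv.swap_apply_of_ne_of_ne h1.symm h3.symm
    have es1 : Equiv.swap kk kk1 jj1 = jj1 := Equiv.swap_apply_of_ne_of_ne h2.symm h4.symm
    have hcm : ∀ c : Fin m → Fin n,
        ((c ∘ Equiv.swap jj jj1) ∘ Equiv.swap kk kk1)
          = ((c ∘ Equiv.swap kk kk1) ∘ Equiv.swap jj jj1) :=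
      fun c => comp_swap_comm m c kk kk1 jj jj1 h1 h2 h3 h4
    apply LinearMap.ext; intro v; funext b
    simp only [Module.End.mul_apply,
      heckeOp_apply2 q m n k hk kk kk1 hkk.symm hkk1.symm,
      heckeOp_apply2 q m n j hj jj jj1 hjj.symm hjj1.symm,
      Function.comp_apply, Equiv.swap_apply_left, Equiv.swap_apply_right,
      eu0, eu1, es0, es1, comp_swap_swap, hcm]
    split_ifs <;> first | (exfalso; omega) | ring1

end HeckeActionOnTensorSpace
end
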